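/- Let p ≥ 2 be an integer and let x be a real number with 0 < x ≤ 1/p satisfying (1 − x²)^{p−1}·(1 + x − x²) = 1. Then p + 1/2 − 4/(3p) < 1/x < p + 1/2. -/

import Mathlib

set_option maxHeartbeats 2000000


/-- Bounds on the reciprocal of the positive root `x ∈ (0, 1/p]` of
`(1 − x²)^{p−1}(1 + x − x²) = 1`: one has `p + 1/2 − 4/(3p) < 1/x < p + 1/2`. -/
theorem stmt14 (p : ℕ) (hp : 2 ≤ p) (x : ℝ) (hx0 : 0 < x)
    (hx1 : x ≤ 1 / (p : ℝ))
    (heq : (1 - x ^ 2) ^ (p - 1) * (1 + x - x ^ 2) = 1) :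
    (p : ℝ) + 1 / 2 - 4 / (3 * (p : ℝ)) < 1 / x ∧ 1 / x < (p : ℝ) + 1 / 2 := by
  obtain ⟨m, rfl⟩ : ∃ m, p = m + 2 := ⟨p - 2, by omega⟩
  rw [show m + 2 - 1 = m + 1 from rfl] at heq
  push_cast at hx1 ⊢
  set q : ℝ := (m : ℝ) + 2 with hq_def
  have hq2 : (2:ℝ) ≤ q := by rw [hq_def]; have := Nat.cast_nonneg (α := ℝ) m; linarith
  have hqpos : (0:ℝ) < q := by linarith
  have hq0 : q ≠ 0 := ne_of_gt hqpos
  have hxhalf : x ≤ 1/2 := hx1.trans (one_div_le_one_div_of_le two_pos hq2)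
  have hu : (0:ℝ) < 1 - x^2 := by nlinarith
  have hx2 : x^2 ≤ 1/q^2 := by
    have h := pow_le_pow_left₀ hx0.le hx1 2
    calc x^2 ≤ (1/q)^2 := h
      _ = 1/q^2 := by rw [div_pow, one_pow]
  set S : ℝ := ∑ k ∈ Finset.range (m+2), (1-x^2)^k with hS_def
  set T : ℝ := ∑ j ∈ Finset.range (m+2), ((1-x^2)⁻¹)^j with hT_def
  have hg : S * ((1-x^2) - 1) = (1-x^2)^(m+2) - 1 := geom_sum_mul _ _
  have hpow : (1-x^2)^(m+2) = (1-x^2)^(m+1) * (1-x^2) := pow_succ _ _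
  have h1 : x * (1-x^2)^(m+1) = x^2 * S := by linear_combination heq + hg + hpow
  have h2 : (1-x^2)^(m+1) = x * S := mul_left_cancel₀ hx0.ne' (by linear_combination h1)
  have h3 : T * (1-x^2)^(m+1) = S := by
    rw [hT_def, Finset.sum_mul]
    have hterm : ∀ j ∈ Finset.range (m+2),
        ((1-x^2)⁻¹)^j * (1-x^2)^(m+1) = (1-x^2)^(m+1-j) := by
      intro j hj
      have hne : (1-x^2)^j ≠ 0 := pow_ne_zero _ (ne_of_gt hu)
      rw [inv_pow, inv_mul_eq_div, div_eq_iff hne, ← pow_add]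
      congr 1
      have := Finset.mem_range.mp hj
      omega
    rw [Finset.sum_congr rfl hterm]
    exact Finset.sum_range_reflect (fun k => (1-x^2)^k) (m+2)
  have hS_pos : 0 < S := by
    rw [hS_def]
    exact Finset.sum_pos (fun k _ => pow_pos hu k) (Finset.nonempty_range_iff.mpr (by omega))
  have h4 : x * T = 1 := by
    rw [h2] at h3
    exact mul_right_cancel₀ hS_pos.ne' (by linear_combination h3)
  have h1x : 1/x = T := by rw [div_eq_iff hx0.ne']; linear_combination -h4
  -- constants
  have hd : (0:ℝ) < q^2 - q + 1 := by nlinarith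
  have hd0 : q^2 - q + 1 ≠ 0 := ne_of_gt hd
  set C : ℝ := q^2/(q^2 - q + 1) with hC_def
  have hC1 : (1:ℝ) ≤ C := by rw [hC_def, le_div_iff₀ hd]; nlinarith
  have hCpos : (0:ℝ) < C := lt_of_lt_of_le one_pos hC1
  -- termwise bounds
  have hlb : ∀ j ∈ Finset.range (m+2), 1 + (j:ℝ) * x^2 ≤ ((1-x^2)⁻¹)^j := by
    intro j _
    have hv : 1 + x^2 ≤ (1-x^2)⁻¹ := by
      rw [← one_div, le_div_iff₀ hu]; nlinarith [sq_nonneg (x^2)]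
    calc 1 + (j:ℝ)*x^2 ≤ (1+x^2)^j := one_add_mul_le_pow (by nlinarith : (-2:ℝ) ≤ x^2) j
      _ ≤ ((1-x^2)⁻¹)^j := pow_le_pow_left₀ (by positivity) hv j
  have hub : ∀ j ∈ Finset.range (m+2), ((1-x^2)⁻¹)^j ≤ 1 + (j:ℝ) * (x^2 * C) := by
    intro j hj
    have hjq : (j:ℝ) ≤ q - 1 := by
      have h := Finset.mem_range.mp hj
      have h' : (j:ℝ) ≤ (m:ℝ) + 1 := by exact_mod_cast Nat.lt_succ_iff.mp h
      rw [hq_def]; linarith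
    have ht0 : (0:ℝ) ≤ (j:ℝ) * x^2 := by positivity
    have ht1 : (j:ℝ) * x^2 ≤ (q-1)/q^2 := by
      calc (j:ℝ) * x^2 ≤ (q-1) * (1/q^2) := mul_le_mul hjq hx2 (by positivity) (by linarith)
        _ = (q-1)/q^2 := by ring
    have htlt : (q-1)/q^2 < 1 := by rw [div_lt_one (by positivity)]; nlinarith
    have hpos1 : (0:ℝ) < 1 - (j:ℝ)*x^2 := by linarith
    have hBern : 1 - (j:ℝ)*x^2 ≤ (1-x^2)^j := by
      have h := one_add_mul_le_pow (by nlinarith : (-2:ℝ) ≤ -x^2) j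
      calc 1 - (j:ℝ)*x^2 = 1 + (j:ℝ)*(-x^2) := by ring
        _ ≤ (1 + -x^2)^j := h
        _ = (1-x^2)^j := by rw [show (1:ℝ) + -x^2 = 1 - x^2 by ring]
    have h6 : ((1-x^2)⁻¹)^j ≤ (1 - (j:ℝ)*x^2)⁻¹ := by
      rw [inv_pow]; exact inv_anti₀ hpos1 hBern
    have h7 : (1 - (j:ℝ)*x^2)⁻¹ ≤ 1 + ((j:ℝ)*x^2)*C := by
      rw [inv_eq_one_div, div_le_iff₀ hpos1]
      have hkey : C * ((q-1)/q^2) = C - 1 := by rw [hC_def, div_mul_div_comm, div_sub_one hd0, div_eq_div_iff (mul_ne_zero hd0 (pow_ne_zero 2 hq0)) hd0]; ring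
      have hCt : C * ((j:ℝ)*x^2) ≤ C - 1 := by
        rw [← hkey]; exact mul_le_mul_of_nonneg_left ht1 hCpos.le
      have hexp : (1 + ((j:ℝ)*x^2)*C)*(1-(j:ℝ)*x^2) - 1
          = (j:ℝ)*x^2 * (C - 1 - C*((j:ℝ)*x^2)) := by ring
      have hnn : (0:ℝ) ≤ (j:ℝ)*x^2 * (C - 1 - C*((j:ℝ)*x^2)) :=
        mul_nonneg ht0 (by linarith)
      linarith
    calc ((1-x^2)⁻¹)^j ≤ (1 - (j:ℝ)*x^2)⁻¹ := h6
      _ ≤ 1 + ((j:ℝ)*x^2)*C := h7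
      _ = 1 + (j:ℝ)*(x^2*C) := by ring
  -- Gauss sum
  have hG : ∑ j ∈ Finset.range (m+2), (j:ℝ) = q*(q-1)/2 := by
    have h := Finset.sum_range_id_mul_two (m+2)
    rw [show m + 2 - 1 = m + 1 from rfl] at h
    have h' : (∑ j ∈ Finset.range (m+2), (j:ℝ)) * 2 = ((m:ℝ)+2) * ((m:ℝ)+1) := by
      have hc := congrArg (Nat.cast (R := ℝ)) h
      push_cast at hc
      exact hc
    rw [hq_def]; linarith
  have hsum_lb : q + q*(q-1)/2 * x^2 ≤ T := by
    rw [hT_def]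
    have e : ∑ j ∈ Finset.range (m+2), (1 + (j:ℝ)*x^2) = q + q*(q-1)/2 * x^2 := by
      rw [Finset.sum_add_distrib, ← Finset.sum_mul, hG, Finset.sum_const, Finset.card_range,
        nsmul_eq_mul]
      push_cast
      rw [hq_def]; ring
    rw [← e]
    exact Finset.sum_le_sum hlb
  have hsum_ub : T ≤ q + q*(q-1)/2 * (x^2*C) := by
    rw [hT_def]
    have e : ∑ j ∈ Finset.range (m+2), (1 + (j:ℝ)*(x^2*C)) = q + q*(q-1)/2 * (x^2*C) := by
      rw [Finset.sum_add_distrib, ← Finset.sum_mul, hG, Finset.sum_const, Finset.card_range,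
        nsmul_eq_mul]
      push_cast
      rw [hq_def]; ring
    rw [← e]
    exact Finset.sum_le_sum hub
  -- upper bound
  have hTub : T < q + 1/2 := by
    have hA : x^2*C ≤ 1/q^2 * C := mul_le_mul_of_nonneg_right hx2 hCpos.le
    have h0 : (0:ℝ) ≤ q*(q-1)/2 := by nlinarith
    have hB : q*(q-1)/2 * (x^2*C) ≤ q*(q-1)/2 * (1/q^2*C) := mul_le_mul_of_nonneg_left hA h0
    have hCfin : q*(q-1)/2 * (1/q^2*C) < 1/2 := by
      rw [hC_def,
        show q*(q-1)/2 * (1/q^2 * (q^2/(q^2-q+1))) = q*(q-1)/(2*(q^2-q+1)) by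
          field_simp]
      rw [div_lt_iff₀ (by nlinarith : (0:ℝ) < 2*(q^2-q+1))]
      nlinarith
    linarith
  have hupper : 1/x < q + 1/2 := by rw [h1x]; exact hTub
  constructor
  · -- lower bound
    have hxq2 : 1 < x * (q + 1/2) := by
      have h := mul_lt_mul_of_pos_left hTub hx0
      rw [h4] at h; exact h
    have hxgt : 2/(2*q+1) < x := by
      rw [div_lt_iff₀ (by linarith : (0:ℝ) < 2*q+1)]; nlinarith
    have hx2gt : (2/(2*q+1))^2 < x^2 := by
      apply pow_lt_pow_left₀ hxgt (by positivity) (by norm_num)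
    have hmul : q*(q-1)/2 * (2/(2*q+1))^2 < q*(q-1)/2 * x^2 :=
      mul_lt_mul_of_pos_left hx2gt (by nlinarith : (0:ℝ) < q*(q-1)/2)
    have hpoly : 1/2 - 4/(3*q) < q*(q-1)/2 * (2/(2*q+1))^2 := by
      have h2q1 : (2*q+1) ≠ 0 := by intro h; nlinarith [h]
      rw [show q*(q-1)/2 * (2/(2*q+1))^2 = 2*q*(q-1)/(2*q+1)^2 by field_simp,
        show 1/2 - 4/(3*q) = (3*q-8)/(6*q) by field_simp; ring]
      rw [div_lt_div_iff₀ (by nlinarith : (0:ℝ) < 6*q) (by nlinarith : (0:ℝ) < (2*q+1)^2)]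
      nlinarith
    rw [h1x]
    linarith
  · exact hupper
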